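/- Let (X, ↪, P) be a primal-proximity space. Then there exists a topology on X whose closed sets are exactly the proximity-closed subsets of X, i.e., the collection of complements of proximity-closed sets forms a topology on X. -/
import Mathlib


open Set

/-- A collection `P` of subsets of `X` is a *primal* on `X`. -/
def IsPrimalOn {X : Type*} (P : Set (Set X)) : Prop :=
  (Set.univ : Set X) ∉ P ∧
  (∀ A B : Set X, A ∈ P → B ⊆ A → B ∈ P) ∧
  (∀ A B : Set X, A ∩ B ∈ P → A ∈ P ∨ B ∈ P)

/-- A binary relation `r` on the power set of `X` is a *primal-proximity* with
respect to a primal `P` on `X`. -/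
def IsPrimalProximity {X : Type*} (P : Set (Set X)) (r : Set X → Set X → Prop) : Prop :=
  (∀ A B : Set X, r A B → r B A) ∧
  (∀ A B C : Set X, r A (B ∪ C) ↔ (r A B ∨ r A C)) ∧
  (∀ A : Set X, Aᶜ ∉ P → ∀ B : Set X, ¬ r A B) ∧
  (∀ A B : Set X, (A ∩ B)ᶜ ∈ P → r A B) ∧
  (∀ A B : Set X, ¬ r A B →
    ∃ C D : Set X, ¬ r A Cᶜ ∧ ¬ r Dᶜ B ∧ (C ∩ D)ᶜ ∉ P)

/-- The point-primal proximity of `A`: `A^↪ = {x | {x} ↪ A}`. -/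
def ppp {X : Type*} (r : Set X → Set X → Prop) (A : Set X) : Set X :=
  {x : X | r {x} A}

theorem stmt_14 {X : Type*} [Nonempty X] (P : Set (Set X)) (r : Set X → Set X → Prop)
    (hP : IsPrimalOn P) (hr : IsPrimalProximity P r) :
    ∃ T : TopologicalSpace X,
      ∀ F : Set X, @IsClosed X T F ↔ (∀ x : X, r {x} F → x ∈ F) := by
  obtain ⟨hsym, hunion, hP3, hP4, hP5⟩ := hr
  have hmono : ∀ A B C : Set X, r A B → B ⊆ C → r A C := by
    intro A B C h hBC
    have hBC' : B ∪ C = C := union_eq_self_of_subset_left hBC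
    have := (hunion A B C).mpr (Or.inl h)
    rwa [hBC'] at this
  have hempty : ∀ A : Set X, ¬ r A ∅ := by
    intro A h
    have : (∅ : Set X)ᶜ ∉ P := by simpa using hP.1
    exact hP3 ∅ this A (hsym A ∅ h)
  set T : Set (Set X) := {F | ∀ x : X, r {x} F → x ∈ F} with hT
  have hEmp : (∅ : Set X) ∈ T := fun x h => absurd h (hempty {x})
  have hInt : ∀ A, A ⊆ T → ⋂₀ A ∈ T :=
    fun A hA x hx F hF => hA hF x (hmono {x} (⋂₀ A) F hx (sInter_subset_of_mem hF))
  have hUn : ∀ A, A ∈ T → ∀ B, B ∈ T → A ∪ B ∈ T := by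
    intro A hA B hB x hx
    rcases (hunion {x} A B).mp hx with h | h
    · exact Or.inl (hA x h)
    · exact Or.inr (hB x h)
  letI T' : TopologicalSpace X := TopologicalSpace.ofClosed T hEmp hInt hUn
  have key : ∀ F : Set X, IsOpen F ↔ Fᶜ ∈ T := fun F => Iff.rfl
  refine ⟨T', fun F => ?_⟩
  rw [← isOpen_compl_iff, key, compl_compl]
  exact Iff.rfl
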